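/- Let α ∈ ℝ and let β > 0 be not an integer. Then for every γ ∈ ℝ there exists a unique formal power series f ∈ ℝ[[X, Y]] in two variables whose constant coefficient is 0 and whose coefficient of Y (i.e. of X^0Y^1) is γ, satisfying X·∂f/∂X + β·Y·∂f/∂Y − β·f + β·f² + α·X = 0 in ℝ[[X, Y]]. (Upon substituting Y = x^β this is the expansion of the general solution of the singular Riccati equation x·w′ − β·w + β·w² + α·x = 0 as a bivariate series in x and x^β, with arbitrary parameter c_{0,1} = γ.) -/

import Mathlib

/-- The Euler-type operator `X·∂/∂X + β·Y·∂/∂Y` on bivariate formal power series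
(variable `0` is `X`, variable `1` is `Y`), defined coefficientwise:
the coefficient of `X^n Y^m` in `eulerOp β f` is `(n + β m)` times that of `f`.
Under the substitution `Y = x^β` this operator becomes `x·d/dx`. -/
noncomputable def eulerOp (β : ℝ) (f : MvPowerSeries (Fin 2) ℝ) : MvPowerSeries (Fin 2) ℝ :=
  fun d => (((d 0 : ℕ) : ℝ) + β * ((d 1 : ℕ) : ℝ)) * MvPowerSeries.coeff (R := ℝ) d f

namespace RiccatiAux

/-- Auxiliary coefficient recursion: `F α β γ k d` is the coefficient at `d`,
correct when `d 0 + d 1 ≤ k`. -/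
noncomputable def F (α β γ : ℝ) : ℕ → (Fin 2 →₀ ℕ) → ℝ
  | 0, _ => 0
  | (k+1), d =>
      if d 0 + d 1 ≤ k then F α β γ k d
      else if d = Finsupp.single 1 1 then γ
      else -(β * ∑ p ∈ Finset.HasAntidiagonal.antidiagonal d, F α β γ k p.1 * F α β γ k p.2
              + (if d = Finsupp.single 0 1 then α else 0))
           / (((d 0 : ℕ) : ℝ) + β * ((d 1 : ℕ) : ℝ) - β)

noncomputable def c (α β γ : ℝ) (d : Fin 2 →₀ ℕ) : ℝ := F α β γ (d 0 + d 1) d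

lemma deg_eq_zero {d : Fin 2 →₀ ℕ} (h : d 0 + d 1 = 0) : d = 0 := by
  ext i
  fin_cases i <;> simp_all

lemma c_zero (α β γ : ℝ) : c α β γ 0 = 0 := rfl

lemma single11_deg : ((Finsupp.single 1 1 : Fin 2 →₀ ℕ) 0 + (Finsupp.single 1 1 : Fin 2 →₀ ℕ) 1) = 1 := by
  simp [Finsupp.single_apply]

lemma c_single11 (α β γ : ℝ) : c α β γ (Finsupp.single 1 1) = γ := by
  rw [c, single11_deg]
  rw [F]
  rw [single11_deg]
  simp

lemma F_stable (α β γ : ℝ) : ∀ k (d : Fin 2 →₀ ℕ), d 0 + d 1 ≤ k → F α β γ k d = c α β γ d := by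
  intro k
  induction k with
  | zero => intro d hd; rw [c, Nat.le_zero.mp hd]
  | succ k ih =>
    intro d hd
    rcases Nat.lt_or_ge (d 0 + d 1) (k+1) with h | h
    · rw [F, if_pos (Nat.lt_succ_iff.mp h), ih d (Nat.lt_succ_iff.mp h)]
    · have : d 0 + d 1 = k + 1 := le_antisymm hd h
      rw [c, this]

lemma c_spec (α β γ : ℝ) (d : Fin 2 →₀ ℕ) (hd0 : d ≠ 0) (hd1 : d ≠ Finsupp.single 1 1) :
    c α β γ d = -(β * ∑ p ∈ Finset.HasAntidiagonal.antidiagonal d, c α β γ p.1 * c α β γ p.2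
              + (if d = Finsupp.single 0 1 then α else 0))
           / (((d 0 : ℕ) : ℝ) + β * ((d 1 : ℕ) : ℝ) - β) := by
  obtain ⟨k, hk⟩ : ∃ k, d 0 + d 1 = k + 1 := by
    have : d 0 + d 1 ≠ 0 := fun h => hd0 (deg_eq_zero h)
    exact ⟨d 0 + d 1 - 1, by omega⟩
  rw [c, hk, F, if_neg (by omega), if_neg hd1]
  have hS : ∑ p ∈ Finset.HasAntidiagonal.antidiagonal d, F α β γ k p.1 * F α β γ k p.2
      = ∑ p ∈ Finset.HasAntidiagonal.antidiagonal d, c α β γ p.1 * c α β γ p.2 := by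
    refine Finset.sum_congr rfl ?_
    intro p hp
    have hsum : p.1 + p.2 = d := Finset.HasAntidiagonal.mem_antidiagonal.mp hp
    have h0 : p.1 0 + p.2 0 = d 0 := by rw [← hsum]; simp
    have h1 : p.1 1 + p.2 1 = d 1 := by rw [← hsum]; simp
    by_cases hp1 : p.1 = 0
    · have hc : c α β γ p.1 = 0 := by rw [hp1, c_zero]
      have hf : F α β γ k p.1 = 0 := by
        rw [hp1]
        rw [F_stable α β γ k 0 (by simp), c_zero]
      rw [hc, hf, zero_mul, zero_mul]
    · by_cases hp2 : p.2 = 0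
      · have hc : c α β γ p.2 = 0 := by rw [hp2, c_zero]
        have hf : F α β γ k p.2 = 0 := by
          rw [hp2, F_stable α β γ k 0 (by simp), c_zero]
        rw [hc, hf, mul_zero, mul_zero]
      · have d1pos : 1 ≤ p.1 0 + p.1 1 := by
          by_contra h
          exact hp1 (deg_eq_zero (by omega))
        have d2pos : 1 ≤ p.2 0 + p.2 1 := by
          by_contra h
          exact hp2 (deg_eq_zero (by omega))
        rw [F_stable α β γ k p.1 (by omega), F_stable α β γ k p.2 (by omega)]

  rw [hS]
lemma denom_ne (β : ℝ) (hβpos : 0 < β) (hβ : ∀ k : ℤ, β ≠ (k : ℝ)) (d : Fin 2 →₀ ℕ)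
    (hd1 : d ≠ Finsupp.single 1 1) :
    (((d 0 : ℕ) : ℝ) + β * ((d 1 : ℕ) : ℝ) - β) ≠ 0 := by
  rcases h : d 1 with _ | m
  · -- m = 0 : n - β ≠ 0
    intro hc
    apply hβ (d 0 : ℤ)
    push_cast at hc ⊢
    linarith
  · rcases m with _ | m
    · -- m = 1 : value is n, and n ≠ 0 since d ≠ single 1 1
      have hn : d 0 ≠ 0 := by
        intro hn0
        apply hd1
        ext i
        fin_cases i <;> simp_all [Finsupp.single_apply]
      intro hc
      have : ((d 0 : ℕ) : ℝ) = 0 := by push_cast at hc ⊢; linarith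
      exact hn (by exact_mod_cast this)
    · -- m ≥ 2
      have h2 : (2:ℝ) ≤ ((m + 1 + 1 : ℕ) : ℝ) := by push_cast; linarith
      have hn : (0:ℝ) ≤ ((d 0 : ℕ) : ℝ) := Nat.cast_nonneg _
      have hpos : (0:ℝ) < ((d 0 : ℕ) : ℝ) + β * ((m + 1 + 1 : ℕ) : ℝ) - β := by nlinarith
      exact ne_of_gt hpos

lemma eqn_coeff (α β : ℝ) (g : MvPowerSeries (Fin 2) ℝ) (d : Fin 2 →₀ ℕ) :
    MvPowerSeries.coeff (R := ℝ) d (eulerOp β g - MvPowerSeries.C (σ := Fin 2) (R := ℝ) β * g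
        + MvPowerSeries.C (σ := Fin 2) (R := ℝ) β * g ^ 2
        + MvPowerSeries.C (σ := Fin 2) (R := ℝ) α * MvPowerSeries.X 0)
    = (((d 0 : ℕ) : ℝ) + β * ((d 1 : ℕ) : ℝ)) * MvPowerSeries.coeff (R := ℝ) d g
      - β * MvPowerSeries.coeff (R := ℝ) d g
      + β * ∑ p ∈ Finset.HasAntidiagonal.antidiagonal d,
          MvPowerSeries.coeff (R := ℝ) p.1 g * MvPowerSeries.coeff (R := ℝ) p.2 g
      + (if d = Finsupp.single 0 1 then α else 0) := by
  rw [map_add, map_add, map_sub, MvPowerSeries.coeff_C_mul, MvPowerSeries.coeff_C_mul,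
    MvPowerSeries.coeff_C_mul, sq, MvPowerSeries.coeff_mul, MvPowerSeries.coeff_X]
  have h1 : MvPowerSeries.coeff (R := ℝ) d (eulerOp β g)
      = (((d 0 : ℕ) : ℝ) + β * ((d 1 : ℕ) : ℝ)) * MvPowerSeries.coeff (R := ℝ) d g := rfl
  rw [h1]
  split <;> ring

/-- the equation holds for the constructed series `c`. -/
lemma c_solves (α β γ : ℝ) (hβpos : 0 < β) (hβ : ∀ k : ℤ, β ≠ (k : ℝ)) (d : Fin 2 →₀ ℕ) :
    (((d 0 : ℕ) : ℝ) + β * ((d 1 : ℕ) : ℝ)) * c α β γ d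
      - β * c α β γ d
      + β * ∑ p ∈ Finset.HasAntidiagonal.antidiagonal d, c α β γ p.1 * c α β γ p.2
      + (if d = Finsupp.single 0 1 then α else 0) = 0 := by
  by_cases hd1 : d = Finsupp.single 1 1
  · subst hd1
    have hsum : ∑ p ∈ Finset.HasAntidiagonal.antidiagonal (Finsupp.single 1 1 : Fin 2 →₀ ℕ),
        c α β γ p.1 * c α β γ p.2 = 0 := by
      apply Finset.sum_eq_zero
      intro p hp
      have hsum : p.1 + p.2 = Finsupp.single 1 1 := Finset.HasAntidiagonal.mem_antidiagonal.mp hp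
      have h0 : p.1 0 + p.2 0 = 0 := by
        have := DFunLike.congr_fun hsum 0
        simpa [Finsupp.single_apply] using this
      have h1 : p.1 1 + p.2 1 = 1 := by
        have := DFunLike.congr_fun hsum 1
        simpa [Finsupp.single_apply] using this
      rcases Nat.eq_zero_or_pos (p.1 1) with hz | hz
      · have : p.1 = 0 := deg_eq_zero (by omega)
        rw [this, c_zero, zero_mul]
      · have : p.2 = 0 := deg_eq_zero (by omega)
        rw [this, c_zero, mul_zero]
    rw [hsum]
    have hne : (Finsupp.single 1 1 : Fin 2 →₀ ℕ) ≠ Finsupp.single 0 1 := by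
      intro h
      have := DFunLike.congr_fun h 0
      simp [Finsupp.single_apply] at this
    rw [if_neg hne]
    have h0 : ((Finsupp.single 1 1 : Fin 2 →₀ ℕ) 0 : ℝ) = 0 := by
      simp [Finsupp.single_apply]
    have h1 : ((Finsupp.single 1 1 : Fin 2 →₀ ℕ) 1 : ℝ) = 1 := by
      simp [Finsupp.single_apply]
    rw [h0, h1]
    ring
  · by_cases hd0 : d = 0
    · subst hd0
      have hsum : ∑ p ∈ Finset.HasAntidiagonal.antidiagonal (0 : Fin 2 →₀ ℕ),
          c α β γ p.1 * c α β γ p.2 = 0 := by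
        apply Finset.sum_eq_zero
        intro p hp
        have hsum : p.1 + p.2 = 0 := Finset.HasAntidiagonal.mem_antidiagonal.mp hp
        have : p.1 = 0 := by
          have := (add_eq_zero.mp hsum).1
          exact this
        rw [this, c_zero, zero_mul]
      rw [hsum, c_zero]
      have hne : (0 : Fin 2 →₀ ℕ) ≠ Finsupp.single 0 1 := by
        intro h
        have := DFunLike.congr_fun h 0
        simp [Finsupp.single_apply] at this
      rw [if_neg hne]
      ring
    · have hden := denom_ne β hβpos hβ d hd1
      have hc := c_spec α β γ d hd0 hd1
      rw [eq_div_iff hden] at hc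
      linear_combination hc

end RiccatiAux

open RiccatiAux

/-- **Existence and uniqueness of the bivariate series solution of the singular Riccati
equation**: for `β > 0` not an integer and any `γ ∈ ℝ` there is a unique
`f ∈ ℝ[[X,Y]]` with zero constant coefficient and `Y`-coefficient `γ` satisfying
`X ∂f/∂X + β Y ∂f/∂Y - β f + β f² + α X = 0`. -/
theorem riccati_bivariate_series (α β : ℝ) (hβpos : 0 < β) (hβ : ∀ k : ℤ, β ≠ (k : ℝ))
    (γ : ℝ) :
    ∃! f : MvPowerSeries (Fin 2) ℝ,
      MvPowerSeries.coeff (R := ℝ) 0 f = 0 ∧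
      MvPowerSeries.coeff (R := ℝ) (Finsupp.single 1 1) f = γ ∧
      eulerOp β f - MvPowerSeries.C (σ := Fin 2) (R := ℝ) β * f
        + MvPowerSeries.C (σ := Fin 2) (R := ℝ) β * f ^ 2
        + MvPowerSeries.C (σ := Fin 2) (R := ℝ) α * MvPowerSeries.X 0 = 0 := by
  refine ⟨(c α β γ : MvPowerSeries (Fin 2) ℝ), ⟨c_zero α β γ, c_single11 α β γ, ?_⟩, ?_⟩
  · ext d
    rw [map_zero]
    refine (eqn_coeff α β (c α β γ : MvPowerSeries (Fin 2) ℝ) d).trans ?_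
    have : ∀ e, MvPowerSeries.coeff (R := ℝ) e (c α β γ : MvPowerSeries (Fin 2) ℝ) = c α β γ e :=
      fun e => rfl
    simp only [this]
    exact c_solves α β γ hβpos hβ d
  · rintro g ⟨hg0, hg1, hgeq⟩
    have key : ∀ k (d : Fin 2 →₀ ℕ), d 0 + d 1 ≤ k → MvPowerSeries.coeff (R := ℝ) d g = c α β γ d := by
      intro k
      induction k with
      | zero =>
        intro d hd
        have : d = 0 := deg_eq_zero (Nat.le_zero.mp hd)
        subst this
        rw [hg0, c_zero]
      | succ k ih =>
        intro d hd
        rcases Nat.lt_or_ge (d 0 + d 1) (k+1) with h | h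
        · exact ih d (Nat.lt_succ_iff.mp h)
        · by_cases hd1 : d = Finsupp.single 1 1
          · subst hd1; rw [hg1, c_single11]
          · have hd0 : d ≠ 0 := by
              intro h0; subst h0; simp at h
            -- coefficient equation for g at d
            have hcoeff := congrArg (MvPowerSeries.coeff (R := ℝ) d) hgeq
            rw [map_zero, eqn_coeff] at hcoeff
            -- replace sum by c-sum via induction
            have hsum : ∑ p ∈ Finset.HasAntidiagonal.antidiagonal d,
                MvPowerSeries.coeff (R := ℝ) p.1 g * MvPowerSeries.coeff (R := ℝ) p.2 g
                = ∑ p ∈ Finset.HasAntidiagonal.antidiagonal d, c α β γ p.1 * c α β γ p.2 := by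
              refine Finset.sum_congr rfl ?_
              intro p hp
              have hpsum : p.1 + p.2 = d := Finset.HasAntidiagonal.mem_antidiagonal.mp hp
              have h0 : p.1 0 + p.2 0 = d 0 := by rw [← hpsum]; simp
              have h1 : p.1 1 + p.2 1 = d 1 := by rw [← hpsum]; simp
              by_cases hp1 : p.1 = 0
              · rw [hp1, hg0, c_zero, zero_mul, zero_mul]
              · by_cases hp2 : p.2 = 0
                · rw [hp2, hg0, c_zero, mul_zero, mul_zero]
                · have d1pos : 1 ≤ p.1 0 + p.1 1 := by
                    by_contra hcon
                    exact hp1 (deg_eq_zero (by omega))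
                  have d2pos : 1 ≤ p.2 0 + p.2 1 := by
                    by_contra hcon
                    exact hp2 (deg_eq_zero (by omega))
                  have hdk : d 0 + d 1 = k + 1 := le_antisymm hd h
                  rw [ih p.1 (by omega), ih p.2 (by omega)]
            rw [hsum] at hcoeff
            have hden := denom_ne β hβpos hβ d hd1
            have hc := c_spec α β γ d hd0 hd1
            rw [eq_div_iff hden] at hc
            have h2 : (MvPowerSeries.coeff (R := ℝ) d g - c α β γ d)
                * (((d 0 : ℕ) : ℝ) + β * ((d 1 : ℕ) : ℝ) - β) = 0 := by
              linear_combination hcoeff - hc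
            rcases mul_eq_zero.mp h2 with h3 | h3
            · linarith [h3]
            · exact absurd h3 hden
    ext d
    exact key (d 0 + d 1) d le_rfl
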